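/- (Large girth estimate, first case) Let G be a finite simple cubic graph (every vertex has degree exactly 3) with first Betti number b ≥ 3, and suppose S > 0 is a real number such that every finite simple graph with first Betti number at least b−2, equipped with any probability edge weighting, contains a cycle of weight at most S. Then for every probability edge weighting λ of G there exists a cycle C in G with λ(C) ≤ ((b−2)/(b−1))·S. -/

import Mathlib

attribute [local instance] Classical.propDecidable

/-- Large girth estimate, part (1) (Lemma 3.4 of the paper): if `G` is a cubic graph with
first Betti number `b ≥ 3` (encoded by `|E| + c = |V| + b`), and if every graph of first
Betti number at least `b − 2` with a probability edge weighting has a cycle of weight at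
most `S > 0`, then every probability edge weighting of `G` admits a cycle of weight at
most `((b−2)/(b−1))·S`. -/
theorem large_girth_estimate_one {V : Type} [Fintype V] (G : SimpleGraph V)
    (hcubic : ∀ v : V, G.degree v = 3)
    (b : ℕ) (hb : 3 ≤ b)
    (hbetti : G.edgeFinset.card + Nat.card G.ConnectedComponent = Fintype.card V + b)
    (S : ℝ) (hSpos : 0 < S)
    (hsys : ∀ (V' : Type) [Fintype V'] (G' : SimpleGraph V') (b' : ℕ),
      G'.edgeFinset.card + Nat.card G'.ConnectedComponent = Fintype.card V' + b' →
      b - 2 ≤ b' →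
      ∀ lam' : Sym2 V' → ℝ, (∀ e ∈ G'.edgeFinset, 0 ≤ lam' e) →
        (∑ e ∈ G'.edgeFinset, lam' e = 1) →
        ∃ (x : V') (w : G'.Walk x x), w.IsCycle ∧ ∑ e ∈ w.edges.toFinset, lam' e ≤ S)
    (lam : Sym2 V → ℝ) (hnn : ∀ e ∈ G.edgeFinset, 0 ≤ lam e)
    (hsum : ∑ e ∈ G.edgeFinset, lam e = 1) :
    ∃ (x : V) (w : G.Walk x x), w.IsCycle ∧
      ∑ e ∈ w.edges.toFinset, lam e ≤ (((b : ℝ) - 2) / ((b : ℝ) - 1)) * S := by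
  by_contra hcon
  push_neg at hcon
  set t : ℝ := (((b : ℝ) - 2) / ((b : ℝ) - 1)) * S with ht
  have hbR : (3:ℝ) ≤ (b:ℝ) := by exact_mod_cast hb
  have hb1 : (0:ℝ) < (b:ℝ) - 1 := by linarith
  have hb2 : (0:ℝ) < (b:ℝ) - 2 := by linarith
  have htpos : 0 < t := mul_pos (div_pos hb2 hb1) hSpos
  -- counting facts
  have hsurjG : Function.Surjective (G.connectedComponentMk) := fun c =>
    c.ind fun v => ⟨v, rfl⟩
  have hcG_le : Nat.card G.ConnectedComponent ≤ Fintype.card V := by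
    simpa [Nat.card_eq_fintype_card] using Nat.card_le_card_of_surjective _ hsurjG
  have h3V : Fintype.card V * 3 = 2 * G.edgeFinset.card := by
    rw [← G.sum_degrees_eq_twice_card_edges]
    simp [hcubic, Finset.card_univ, mul_comm]
  have hVpos : 0 < Fintype.card V := by omega
  have hcomp_pos : 1 ≤ Nat.card G.ConnectedComponent := by
    have hne : Nonempty V := Fintype.card_pos_iff.mp hVpos
    obtain ⟨v⟩ := hne
    have : Nonempty G.ConnectedComponent := ⟨G.connectedComponentMk v⟩
    exact Nat.card_pos
  have hVle : Fintype.card V ≤ 2 * b - 2 := by omega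
  -- weighted handshake
  have hw2 : ∑ v : V, ∑ e ∈ G.edgeFinset.filter (fun e => v ∈ e), lam e = 2 := by
    calc ∑ v : V, ∑ e ∈ G.edgeFinset.filter (fun e => v ∈ e), lam e
        = ∑ v : V, ∑ e ∈ G.edgeFinset, if v ∈ e then lam e else 0 := by
          simp [Finset.sum_filter]
      _ = ∑ e ∈ G.edgeFinset, ∑ v : V, if v ∈ e then lam e else 0 := Finset.sum_comm
      _ = ∑ e ∈ G.edgeFinset, 2 * lam e := by
          refine Finset.sum_congr rfl fun e he => ?_
          have hd : ¬ e.IsDiag :=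
            G.not_isDiag_of_mem_edgeSet (by rwa [SimpleGraph.mem_edgeFinset] at he)
          induction e using Sym2.inductionOn with
          | hf a b =>
            have hab : a ≠ b := by simpa using hd
            have hfil : Finset.univ.filter (fun v : V => v ∈ s(a,b)) = {a, b} := by
              ext v; simp [Sym2.mem_iff]
            rw [← Finset.sum_filter, hfil, Finset.sum_pair hab]
            ring
      _ = 2 := by rw [← Finset.mul_sum, hsum, mul_one]
  -- choose heavy vertex
  have hex : ∃ v : V, 1/((b:ℝ)-1) ≤ ∑ e ∈ G.edgeFinset.filter (fun e => v ∈ e), lam e := by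
    by_contra hno
    push_neg at hno
    have hlt : ∑ v : V, ∑ e ∈ G.edgeFinset.filter (fun e => v ∈ e), lam e
        < ∑ _v : V, 1/((b:ℝ)-1) :=
      Finset.sum_lt_sum_of_nonempty (Finset.univ_nonempty_iff.mpr
        (Fintype.card_pos_iff.mp hVpos)) (fun v _ => hno v)
    rw [hw2, Finset.sum_const, nsmul_eq_mul, Finset.card_univ] at hlt
    have hcastV : (Fintype.card V : ℝ) ≤ 2*(b:ℝ) - 2 := by
      have h1 : (Fintype.card V : ℝ) ≤ ((2*b - 2 : ℕ) : ℝ) := Nat.cast_le.mpr hVle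
      have h2 : ((2*b - 2 : ℕ) : ℝ) = 2*(b:ℝ) - 2 := by
        push_cast [Nat.cast_sub (by omega : 2 ≤ 2*b)]; ring
      linarith
    have hfrac : (2*(b:ℝ)-2) * (1/((b:ℝ)-1)) = 2 := by field_simp
    nlinarith [mul_le_mul_of_nonneg_right hcastV (le_of_lt (by positivity : (0:ℝ) < 1/((b:ℝ)-1)))]
  obtain ⟨v₀, hT⟩ := hex
  set T : ℝ := ∑ e ∈ G.edgeFinset.filter (fun e => v₀ ∈ e), lam e with hTdef
  -- the graph H
  set H : SimpleGraph V := G.deleteEdges (G.incidenceSet v₀) with hHdef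
  have hHle : H ≤ G := SimpleGraph.deleteEdges_le _
  have hHE : H.edgeFinset = G.edgeFinset.filter (fun e => ¬ v₀ ∈ e) := by
    ext e
    simp only [SimpleGraph.mem_edgeFinset, Finset.mem_filter, hHdef,
      SimpleGraph.edgeSet_deleteEdges, Set.mem_diff, SimpleGraph.incidenceSet,
      Set.mem_setOf_eq]
    tauto
  have hdeg3 : (G.edgeFinset.filter (fun e => v₀ ∈ e)).card = 3 := by
    rw [← hcubic v₀, ← SimpleGraph.card_incidenceFinset_eq_degree]
    congr 1
    rw [SimpleGraph.incidenceFinset_eq_filter]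
  have hEG3 : 3 ≤ G.edgeFinset.card := by
    have := Finset.card_filter_le G.edgeFinset (fun e => v₀ ∈ e)
    omega
  have hEH : H.edgeFinset.card = G.edgeFinset.card - 3 := by
    have := Finset.card_filter_add_card_filter_not
      (s := G.edgeFinset) (p := fun e => v₀ ∈ e)
    rw [hHE]
    omega
  -- component count of H
  haveI : Finite H.ConnectedComponent := Quot.finite _
  haveI : Finite G.ConnectedComponent := Quot.finite _
  haveI : Fintype H.ConnectedComponent := Fintype.ofFinite _
  haveI : Fintype G.ConnectedComponent := Fintype.ofFinite _
  obtain ⟨u, hu⟩ : ∃ u, G.Adj v₀ u := by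
    have : 0 < (G.neighborFinset v₀).card := by
      rw [SimpleGraph.card_neighborFinset_eq_degree, hcubic]; omega
    obtain ⟨u, hu⟩ := Finset.card_pos.mp this
    exact ⟨u, (SimpleGraph.mem_neighborFinset _ _ _).mp hu⟩
  have hnr : ¬ H.Reachable v₀ u := by
    rintro ⟨p⟩
    cases p with
    | nil => exact G.irrefl hu
    | cons h' p' =>
      rw [hHdef, SimpleGraph.deleteEdges_adj] at h'
      exact h'.2 ⟨h'.1, Sym2.mem_mk_left _ _⟩
  set φ : H.ConnectedComponent → G.ConnectedComponent :=
    SimpleGraph.ConnectedComponent.map (SimpleGraph.Hom.ofLE hHle) with hφ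
  have hφmk : ∀ v : V, φ (H.connectedComponentMk v) = G.connectedComponentMk v := by
    intro v
    simp only [hφ, SimpleGraph.ConnectedComponent.map_mk]
    rfl
  have hφsurj : Function.Surjective φ := fun c =>
    c.ind fun v => ⟨H.connectedComponentMk v, hφmk v⟩
  have hφninj : ¬ Function.Injective φ := by
    intro hinj
    have h1 : φ (H.connectedComponentMk v₀) = φ (H.connectedComponentMk u) := by
      rw [hφmk, hφmk]
      exact SimpleGraph.ConnectedComponent.sound hu.reachable
    exact hnr (SimpleGraph.ConnectedComponent.exact (hinj h1))
  have hcH : Nat.card G.ConnectedComponent + 1 ≤ Nat.card H.ConnectedComponent := by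
    have := Fintype.card_lt_of_surjective_not_injective φ hφsurj hφninj
    rw [Nat.card_eq_fintype_card, Nat.card_eq_fintype_card]
    omega
  -- Betti of H
  set b' : ℕ := H.edgeFinset.card + Nat.card H.ConnectedComponent - Fintype.card V with hb'
  have hb'eq : H.edgeFinset.card + Nat.card H.ConnectedComponent = Fintype.card V + b' := by
    omega
  have hb'ge : b - 2 ≤ b' := by omega
  -- remaining weight
  have hrest : ∑ e ∈ H.edgeFinset, lam e = 1 - T := by
    rw [hHE]
    have hsp := Finset.sum_filter_add_sum_filter_not G.edgeFinset (fun e => v₀ ∈ e) lam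
    rw [hsum] at hsp
    linarith [hsp]
  have hHsub : ∀ e ∈ H.edgeFinset, e ∈ G.edgeFinset := by
    intro e he; rw [hHE] at he; exact (Finset.mem_filter.mp he).1
  rcases lt_or_ge T 1 with hT1 | hT1
  · -- main case : renormalize
    have h1T : (0:ℝ) < 1 - T := by linarith
    set μ : Sym2 V → ℝ := fun e => lam e / (1 - T) with hμ
    have hμnn : ∀ e ∈ H.edgeFinset, 0 ≤ μ e := fun e he =>
      div_nonneg (hnn e (hHsub e he)) (le_of_lt h1T)
    have hμsum : ∑ e ∈ H.edgeFinset, μ e = 1 := by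
      rw [hμ, ← Finset.sum_div, hrest, div_self (ne_of_gt h1T)]
    obtain ⟨x, w, hwc, hwle⟩ := hsys V H b' (by convert hb'eq) hb'ge μ (by convert hμnn) (by convert hμsum)
    have hedges : ∀ e ∈ w.edges, e ∈ G.edgeSet := by
      intro e he
      have h1 := w.edges_subset_edgeSet he
      rw [hHdef, SimpleGraph.edgeSet_deleteEdges] at h1
      exact h1.1
    have hlt := hcon x (w.transfer G hedges) (hwc.transfer hedges)
    rw [SimpleGraph.Walk.edges_transfer] at hlt
    have hμw : ∑ e ∈ w.edges.toFinset, μ e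
        = (∑ e ∈ w.edges.toFinset, lam e) / (1 - T) := by
      rw [hμ, Finset.sum_div]
    rw [hμw, div_le_iff₀ h1T] at hwle
    have hfrac2 : 1 - 1/((b:ℝ)-1) = ((b:ℝ)-2)/((b:ℝ)-1) := by
      field_simp
      ring
    have h5 : S * (1 - T) ≤ S * (1 - 1/((b:ℝ)-1)) :=
      mul_le_mul_of_nonneg_left (by linarith) (le_of_lt hSpos)
    have h6 : S * (1 - 1/((b:ℝ)-1)) = t := by rw [hfrac2, ht]; ring
    linarith
  · -- degenerate case : everything outside the star has weight 0
    have hz : ∀ e ∈ H.edgeFinset, lam e = 0 := by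
      have h0 : ∑ e ∈ H.edgeFinset, lam e = 0 := by
        have h1 : 0 ≤ ∑ e ∈ H.edgeFinset, lam e :=
          Finset.sum_nonneg fun e he => hnn e (hHsub e he)
        linarith [hrest]
      intro e he
      exact (Finset.sum_eq_zero_iff_of_nonneg (fun e he => hnn e (hHsub e he))).mp h0 e he
    have hV4 : 4 ≤ Fintype.card V := by
      have hsub : insert v₀ (G.neighborFinset v₀) ⊆ Finset.univ := Finset.subset_univ _
      have hcard : (insert v₀ (G.neighborFinset v₀)).card = 4 := by
        rw [Finset.card_insert_of_notMem (by simp), SimpleGraph.card_neighborFinset_eq_degree,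
          hcubic]
      have := Finset.card_le_card hsub
      rw [hcard, Finset.card_univ] at this
      exact this
    have hEHpos : 0 < H.edgeFinset.card := by omega
    set μ : Sym2 V → ℝ := fun _ => ((H.edgeFinset.card : ℝ))⁻¹ with hμ
    have hμnn : ∀ e ∈ H.edgeFinset, 0 ≤ μ e := fun e _ => inv_nonneg.mpr (Nat.cast_nonneg _)
    have hμsum : ∑ e ∈ H.edgeFinset, μ e = 1 := by
      rw [hμ, Finset.sum_const, nsmul_eq_mul,
        mul_inv_cancel₀ (Nat.cast_ne_zero.mpr (by omega : H.edgeFinset.card ≠ 0))]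
    obtain ⟨x, w, hwc, _⟩ := hsys V H b' (by convert hb'eq) hb'ge μ (by convert hμnn) (by convert hμsum)
    have hedges : ∀ e ∈ w.edges, e ∈ G.edgeSet := by
      intro e he
      have h1 := w.edges_subset_edgeSet he
      rw [hHdef, SimpleGraph.edgeSet_deleteEdges] at h1
      exact h1.1
    have hlt := hcon x (w.transfer G hedges) (hwc.transfer hedges)
    rw [SimpleGraph.Walk.edges_transfer] at hlt
    have hzero : ∑ e ∈ w.edges.toFinset, lam e = 0 := by
      refine Finset.sum_eq_zero fun e he => ?_
      refine hz e ?_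
      rw [SimpleGraph.mem_edgeFinset]
      exact w.edges_subset_edgeSet (List.mem_toFinset.mp he)
    rw [hzero] at hlt
    linarith
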